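/- arXiv:2402.02720 — 2 statements merged into one kernel-verified Lean document; each statement's English description precedes it below -/
import Mathlib

section
/- Let X ⊂ ℝ^d be a closed convex set of diameter at most D, let l_1,…,l_T be convex functions on X, let g_t ∈ ∂l_t(x_t), and let λ_1,…,λ_{T-1} ∈ (0,∞) be discount factors. Consider Online Gradient Descent with learning rate η_t = D·V_t^{-1/2} whenever V_t > 0 (and x_{t+1} = x_t when V_t = 0, in which case g_t = 0): x_{t+1} = Π_X(x_t − η_t g_t). Then for all T ∈ ℕ_+, all loss sequences l_{1:T}, and all comparators u ∈ X, the discounted regret satisfies Reg_T := Σ_{t=1}^T (∏_{i=t}^{T-1} λ_i)·[l_t(x_t) − l_t(u)] ≤ (3/2)·D·√V_T. -/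
open scoped BigOperators RealInnerProductSpace

private lemma abel_bound' (a b : ℕ → ℝ) (C : ℝ)
    (ha0 : ∀ t, 0 ≤ a t) (haC : ∀ t, a t ≤ C) (hb0 : ∀ t, 0 ≤ b t) :
    ∀ T : ℕ, (∀ t, 1 ≤ t → t ≤ T → b (t-1) ≤ b t) →
      ∑ t ∈ Finset.Icc 1 T, b t * (a t - a (t+1)) ≤ C * b T - b T * a (T+1) := by
  intro T
  induction T with
  | zero =>
    intro _
    rw [show Finset.Icc 1 0 = (∅ : Finset ℕ) from Finset.Icc_eq_empty (by omega)]
    simp only [Finset.sum_empty]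
    nlinarith [mul_nonneg (hb0 0) (sub_nonneg.mpr (haC 1))]
  | succ n ih =>
    intro hmono
    have h1 := ih (fun t ht1 ht2 => hmono t ht1 (by omega))
    have h2 : b n ≤ b (n+1) := by
      have := hmono (n+1) (by omega) le_rfl
      simpa using this
    rw [Finset.sum_Icc_succ_top (by omega)]
    nlinarith [h1, mul_nonneg (sub_nonneg.mpr h2) (sub_nonneg.mpr (haC (n+1))),
      mul_nonneg (hb0 (n+1)) (ha0 (n+2))]

private lemma telescope_sum' (b : ℕ → ℝ) :
    ∀ T : ℕ, ∑ t ∈ Finset.Icc 1 T, (b t - b (t-1)) = b T - b 0 := by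
  intro T
  induction T with
  | zero => simp
  | succ n ih =>
    rw [Finset.sum_Icc_succ_top (by omega), ih]
    simp

private lemma proj_dist_le' {F : Type*} [NormedAddCommGroup F] [InnerProductSpace ℝ F]
    {K : Set F} (hK : Convex ℝ K) {y v u : F} (hv : v ∈ K) (hu : u ∈ K)
    (hmin : ∀ w ∈ K, ‖v - y‖ ≤ ‖w - y‖) :
    ‖v - u‖ ^ 2 ≤ ‖y - u‖ ^ 2 := by
  haveI : Nonempty K := ⟨⟨v, hv⟩⟩
  have hinf : ‖y - v‖ = ⨅ w : K, ‖y - (w : F)‖ := by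
    apply le_antisymm
    · apply le_ciInf
      intro w
      rw [norm_sub_rev y v, norm_sub_rev y (w : F)]
      exact hmin w w.2
    · have hbdd : BddBelow (Set.range fun w : K => ‖y - (w : F)‖) :=
        ⟨0, by rintro r ⟨w, rfl⟩; exact norm_nonneg _⟩
      exact ciInf_le hbdd ⟨v, hv⟩
  have hobt := (norm_eq_iInf_iff_real_inner_le_zero hK hv).mp hinf u hu
  have hexp : ‖y - u‖^2 = ‖y - v‖^2 + 2 * ⟪y - v, v - u⟫ + ‖v - u‖^2 := by
    have h : y - u = (y - v) + (v - u) := by abel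
    rw [h, norm_add_sq_real]
  have hnn : (0:ℝ) ≤ ⟪y - v, v - u⟫ := by
    have h : ⟪y - v, v - u⟫ = - ⟪y - v, u - v⟫ := by
      rw [← inner_neg_right]
      congr 1
      abel
    rw [h]
    linarith [hobt]
  nlinarith [sq_nonneg ‖y - v‖]

/-- Gradient-adaptive OGD with learning rate `η_t = D·V_t^{-1/2}` achieves
discounted regret at most `(3/2)·D·√V_T`. -/
theorem adagrad_discounted_regret
    (d T : ℕ) (hT : 1 ≤ T)
    (X : Set (EuclideanSpace ℝ (Fin d))) (hXclosed : IsClosed X) (hXconvex : Convex ℝ X)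
    (D : ℝ) (hD : 0 < D)
    (hdiam : ∀ x ∈ X, ∀ y ∈ X, ‖x - y‖ ≤ D)
    (lam : ℕ → ℝ) (hlam : ∀ i, 0 < lam i)
    (l : ℕ → EuclideanSpace ℝ (Fin d) → ℝ)
    (hconv : ∀ t, ConvexOn ℝ X (l t))
    (x g : ℕ → EuclideanSpace ℝ (Fin d))
    (hxX : ∀ t, x t ∈ X)
    (hsub : ∀ t, ∀ y ∈ X, l t (x t) + ⟪g t, y - x t⟫ ≤ l t y)
    (V : ℕ → ℝ)
    (hV : ∀ t, V t = ∑ i ∈ Finset.Icc 1 t, (∏ j ∈ Finset.Icc i (t-1), (lam j)^2) * ‖g i‖^2)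
    (hOGD : ∀ t, 1 ≤ t →
      (V t = 0 → x (t+1) = x t) ∧
      (0 < V t → x (t+1) ∈ X ∧
        ∀ y ∈ X, ‖x (t+1) - (x t - (D * (Real.sqrt (V t))⁻¹) • g t)‖
          ≤ ‖y - (x t - (D * (Real.sqrt (V t))⁻¹) • g t)‖))
    (u : EuclideanSpace ℝ (Fin d)) (hu : u ∈ X) :
    ∑ t ∈ Finset.Icc 1 T, (∏ i ∈ Finset.Icc t (T-1), lam i) * (l t (x t) - l t u)
      ≤ (3/2) * D * Real.sqrt (V T) := by
  classical
  -- abbreviations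
  set w : ℕ → ℝ := fun t => ∏ i ∈ Finset.Icc t (T-1), lam i with hwdef
  set a : ℕ → ℝ := fun t => ‖x t - u‖^2 with hadef
  set b : ℕ → ℝ := fun t => w t * Real.sqrt (V t) with hbdef
  -- basic facts about V
  have hVnn : ∀ t, 0 ≤ V t := by
    intro t
    rw [hV]
    exact Finset.sum_nonneg fun i _ =>
      mul_nonneg (Finset.prod_nonneg fun j _ => sq_nonneg _) (sq_nonneg _)
  have hV0 : V 0 = 0 := by rw [hV]; simp
  have hVrec : ∀ t : ℕ, 1 ≤ t → V t = (lam (t-1))^2 * V (t-1) + ‖g t‖^2 := by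
    intro t ht
    cases t with
    | zero => omega
    | succ n =>
      simp only [Nat.add_sub_cancel]
      rw [hV (n+1), hV n]
      simp only [Nat.add_sub_cancel]
      rw [Finset.sum_Icc_succ_top (by omega : 1 ≤ n + 1)]
      rw [show Finset.Icc (n+1) n = (∅ : Finset ℕ) from Finset.Icc_eq_empty (by omega)]
      rw [Finset.prod_empty, one_mul, Finset.mul_sum]
      congr 1
      apply Finset.sum_congr rfl
      intro i hi
      obtain ⟨hi1, hi2⟩ := Finset.mem_Icc.mp hi
      obtain ⟨m, rfl⟩ : ∃ m, n = m + 1 := ⟨n - 1, by omega⟩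
      simp only [Nat.add_sub_cancel]
      rw [Finset.prod_Icc_succ_top (by omega : i ≤ m + 1)]
      ring
  have hgsq : ∀ t, 1 ≤ t → ‖g t‖^2 ≤ V t := by
    intro t ht
    have h := hVrec t ht
    nlinarith [mul_nonneg (sq_nonneg (lam (t-1))) (hVnn (t-1))]
  -- facts about weights
  have hwpos : ∀ t, 0 < w t := fun t => Finset.prod_pos fun i _ => hlam i
  have hwrec : ∀ t, 1 ≤ t → t ≤ T → w (t-1) = lam (t-1) * w t := by
    intro t h1 h2
    have h3 : t - 1 ≤ T - 1 := by omega
    have h4 : t - 1 + 1 = t := by omega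
    show ∏ i ∈ Finset.Icc (t-1) (T-1), lam i = lam (t-1) * ∏ i ∈ Finset.Icc t (T-1), lam i
    rw [Finset.Icc_eq_cons_Ioc h3, Finset.prod_cons, ← Finset.Icc_add_one_left_eq_Ioc]
    simp only [Nat.succ_eq_add_one, h4]
  have hwT : w T = 1 := by
    show ∏ i ∈ Finset.Icc T (T-1), lam i = 1
    rw [show Finset.Icc T (T-1) = (∅ : Finset ℕ) from Finset.Icc_eq_empty (by omega)]
    exact Finset.prod_empty
  -- facts about a
  have ha0 : ∀ t, 0 ≤ a t := fun t => sq_nonneg _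
  have haD : ∀ t, a t ≤ D^2 := by
    intro t
    have h := hdiam (x t) (hxX t) u hu
    have h2 := norm_nonneg (x t - u)
    simp only [hadef]
    nlinarith
  -- facts about b
  have hb0 : ∀ t, 0 ≤ b t := fun t =>
    mul_nonneg (hwpos t).le (Real.sqrt_nonneg _)
  have hbprev : ∀ t, 1 ≤ t → t ≤ T →
      b (t-1) = w t * Real.sqrt ((lam (t-1))^2 * V (t-1)) := by
    intro t h1 h2
    simp only [hbdef]
    rw [hwrec t h1 h2, Real.sqrt_mul (sq_nonneg _), Real.sqrt_sq (hlam (t-1)).le]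
    ring
  have hVge : ∀ t, 1 ≤ t → (lam (t-1))^2 * V (t-1) ≤ V t := by
    intro t ht
    have := hVrec t ht
    nlinarith [sq_nonneg ‖g t‖]
  have hbmono : ∀ t, 1 ≤ t → t ≤ T → b (t-1) ≤ b t := by
    intro t h1 h2
    rw [hbprev t h1 h2]
    simp only [hbdef]
    exact mul_le_mul_of_nonneg_left (Real.sqrt_le_sqrt (hVge t h1)) (hwpos t).le
  have hbT : b T = Real.sqrt (V T) := by
    simp only [hbdef, hwT, one_mul]
  have hb00 : b 0 = 0 := by
    simp only [hbdef, hV0, Real.sqrt_zero, mul_zero]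
  -- per-step inequality
  have hstep : ∀ t, 1 ≤ t →
      ⟪g t, x t - u⟫ ≤ Real.sqrt (V t) * (a t - a (t+1)) / (2*D)
        + D * ‖g t‖^2 * (Real.sqrt (V t))⁻¹ / 2 := by
    intro t ht
    rcases (hVnn t).lt_or_eq with hpos | hzero
    · -- V t > 0
      have hspos : 0 < Real.sqrt (V t) := Real.sqrt_pos.mpr hpos
      set s : ℝ := Real.sqrt (V t) with hsdef
      obtain ⟨hmem, hmin⟩ := (hOGD t ht).2 hpos
      have hproj : ‖x (t+1) - u‖^2 ≤ ‖(x t - (D * s⁻¹) • g t) - u‖^2 :=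
        proj_dist_le' hXconvex hmem hu hmin
      have hexp : ‖(x t - (D * s⁻¹) • g t) - u‖^2
          = a t - 2 * (D * s⁻¹) * ⟪g t, x t - u⟫ + (D * s⁻¹)^2 * ‖g t‖^2 := by
        have h1 : (x t - (D * s⁻¹) • g t) - u = (x t - u) - (D * s⁻¹) • g t := by abel
        rw [h1, norm_sub_sq_real, real_inner_smul_right, real_inner_comm, norm_smul,
          mul_pow, Real.norm_eq_abs, sq_abs]
        simp only [hadef]
        ring
      have H : a (t+1) ≤ a t - 2 * (D * s⁻¹) * ⟪g t, x t - u⟫ + (D * s⁻¹)^2 * ‖g t‖^2 := by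
        simp only [hadef]
        rw [← hexp]
        exact hproj
      have hinv : s * s⁻¹ = 1 := mul_inv_cancel₀ hspos.ne'
      have H4 : (2 * (D * s⁻¹) * ⟪g t, x t - u⟫) * s
          ≤ (a t - a (t+1) + (D * s⁻¹)^2 * ‖g t‖^2) * s :=
        mul_le_mul_of_nonneg_right (by linarith) hspos.le
      have e1 : (2 * (D * s⁻¹) * ⟪g t, x t - u⟫) * s = 2 * D * ⟪g t, x t - u⟫ := by
        rw [show (2 * (D * s⁻¹) * ⟪g t, x t - u⟫) * s
          = 2 * D * ⟪g t, x t - u⟫ * (s * s⁻¹) by ring, hinv]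
        ring
      have e2 : (a t - a (t+1) + (D * s⁻¹)^2 * ‖g t‖^2) * s
          = s * (a t - a (t+1)) + D * ((D * s⁻¹) * ‖g t‖^2) := by
        rw [show (a t - a (t+1) + (D * s⁻¹)^2 * ‖g t‖^2) * s
          = s * (a t - a (t+1)) + D * ((D * s⁻¹) * ‖g t‖^2) * (s * s⁻¹) by ring, hinv]
        ring
      have H5 : 2 * D * ⟪g t, x t - u⟫
          ≤ s * (a t - a (t+1)) + D * ((D * s⁻¹) * ‖g t‖^2) := by
        linarith [H4, e1, e2]
      have hgoal : s * (a t - a (t+1)) / (2*D) + D * ‖g t‖^2 * s⁻¹ / 2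
          = (s * (a t - a (t+1)) + D * ((D * s⁻¹) * ‖g t‖^2)) / (2*D) := by
        field_simp
      rw [hgoal, le_div_iff₀ (by positivity : (0:ℝ) < 2*D)]
      linarith [H5]
    · -- V t = 0
      have hg2 : ‖g t‖^2 = 0 := le_antisymm (hzero ▸ hgsq t ht) (sq_nonneg _)
      have hg0 : g t = 0 := by
        have : ‖g t‖ = 0 := by nlinarith [norm_nonneg (g t)]
        exact norm_eq_zero.mp this
      have hxx : x (t+1) = x t := (hOGD t ht).1 hzero.symm
      simp only [hadef, hg0, inner_zero_left, hxx, ← hzero, Real.sqrt_zero, norm_zero,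
        sub_self, mul_zero, zero_mul, zero_div, add_zero, zero_add, zero_pow, le_refl,
        zero_mul]
      norm_num
  -- second-part per-term bound
  have hsecond : ∀ t, 1 ≤ t → t ≤ T →
      w t * ‖g t‖^2 * (Real.sqrt (V t))⁻¹ ≤ 2 * (b t - b (t-1)) := by
    intro t h1 h2
    rw [hbprev t h1 h2]
    have hcnn : 0 ≤ (lam (t-1))^2 * V (t-1) :=
      mul_nonneg (sq_nonneg _) (hVnn _)
    have hVt : V t = (lam (t-1))^2 * V (t-1) + ‖g t‖^2 := hVrec t h1
    rcases (hVnn t).lt_or_eq with hpos | hzero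
    · have hspos : 0 < Real.sqrt (V t) := Real.sqrt_pos.mpr hpos
      have hs2 : Real.sqrt (V t) ^ 2 = V t := Real.sq_sqrt (hVnn t)
      have hr2 : Real.sqrt ((lam (t-1))^2 * V (t-1)) ^ 2 = (lam (t-1))^2 * V (t-1) :=
        Real.sq_sqrt hcnn
      have hrnn : 0 ≤ Real.sqrt ((lam (t-1))^2 * V (t-1)) := Real.sqrt_nonneg _
      have hkey : ‖g t‖^2 * (Real.sqrt (V t))⁻¹
          ≤ 2 * (Real.sqrt (V t) - Real.sqrt ((lam (t-1))^2 * V (t-1))) := by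
        rw [← div_eq_mul_inv, div_le_iff₀ hspos]
        nlinarith [sq_nonneg (Real.sqrt (V t) - Real.sqrt ((lam (t-1))^2 * V (t-1)))]
      simp only [hbdef]
      calc w t * ‖g t‖^2 * (Real.sqrt (V t))⁻¹
          = w t * (‖g t‖^2 * (Real.sqrt (V t))⁻¹) := by ring
        _ ≤ w t * (2 * (Real.sqrt (V t) - Real.sqrt ((lam (t-1))^2 * V (t-1)))) :=
            mul_le_mul_of_nonneg_left hkey (hwpos t).le
        _ = 2 * (w t * Real.sqrt (V t) - w t * Real.sqrt ((lam (t-1))^2 * V (t-1))) := by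
            ring
    · have hg2 : ‖g t‖^2 = 0 := le_antisymm (hzero ▸ hgsq t h1) (sq_nonneg _)
      have hc0 : (lam (t-1))^2 * V (t-1) = 0 := by nlinarith
      simp only [hbdef, hg2, hc0, Real.sqrt_zero, mul_zero, zero_mul, ← hzero]
      norm_num
  -- sum bounds
  have hsum1 : ∑ t ∈ Finset.Icc 1 T, b t * (a t - a (t+1)) ≤ D^2 * Real.sqrt (V T) := by
    have h := abel_bound' a b (D^2) ha0 haD hb0 T hbmono
    have h2 : 0 ≤ Real.sqrt (V T) * a (T+1) := mul_nonneg (Real.sqrt_nonneg _) (ha0 (T+1))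
    rw [hbT] at h
    linarith
  have hsum2 : ∑ t ∈ Finset.Icc 1 T, w t * ‖g t‖^2 * (Real.sqrt (V t))⁻¹
      ≤ 2 * Real.sqrt (V T) := by
    calc ∑ t ∈ Finset.Icc 1 T, w t * ‖g t‖^2 * (Real.sqrt (V t))⁻¹
        ≤ ∑ t ∈ Finset.Icc 1 T, 2 * (b t - b (t-1)) := by
          apply Finset.sum_le_sum
          intro t ht
          obtain ⟨h1, h2⟩ := Finset.mem_Icc.mp ht
          exact hsecond t h1 h2
      _ = 2 * (b T - b 0) := by rw [← Finset.mul_sum, telescope_sum' b T]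
      _ = 2 * Real.sqrt (V T) := by rw [hbT, hb00]; ring
  -- per-term combined bound
  have hterm : ∀ t ∈ Finset.Icc 1 T, w t * (l t (x t) - l t u)
      ≤ b t * (a t - a (t+1)) / (2*D)
        + (D/2) * (w t * ‖g t‖^2 * (Real.sqrt (V t))⁻¹) := by
    intro t ht
    obtain ⟨h1, h2⟩ := Finset.mem_Icc.mp ht
    have hlin : l t (x t) - l t u ≤ ⟪g t, x t - u⟫ := by
      have h := hsub t u hu
      have e : ⟪g t, u - x t⟫ = - ⟪g t, x t - u⟫ := by
        rw [← inner_neg_right]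
        congr 1
        abel
      linarith
    have hs := hstep t h1
    calc w t * (l t (x t) - l t u)
        ≤ w t * ⟪g t, x t - u⟫ := mul_le_mul_of_nonneg_left hlin (hwpos t).le
      _ ≤ w t * (Real.sqrt (V t) * (a t - a (t+1)) / (2*D)
            + D * ‖g t‖^2 * (Real.sqrt (V t))⁻¹ / 2) :=
          mul_le_mul_of_nonneg_left hs (hwpos t).le
      _ = b t * (a t - a (t+1)) / (2*D)
            + (D/2) * (w t * ‖g t‖^2 * (Real.sqrt (V t))⁻¹) := by
          simp only [hbdef]
          ring
  -- put it together
  show ∑ t ∈ Finset.Icc 1 T, w t * (l t (x t) - l t u) ≤ (3/2) * D * Real.sqrt (V T)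
  calc ∑ t ∈ Finset.Icc 1 T, w t * (l t (x t) - l t u)
      ≤ ∑ t ∈ Finset.Icc 1 T, (b t * (a t - a (t+1)) / (2*D)
          + (D/2) * (w t * ‖g t‖^2 * (Real.sqrt (V t))⁻¹)) := Finset.sum_le_sum hterm
    _ = (∑ t ∈ Finset.Icc 1 T, b t * (a t - a (t+1))) / (2*D)
          + (D/2) * ∑ t ∈ Finset.Icc 1 T, w t * ‖g t‖^2 * (Real.sqrt (V t))⁻¹ := by
        rw [Finset.sum_add_distrib, ← Finset.sum_div, ← Finset.mul_sum]
    _ ≤ (D^2 * Real.sqrt (V T)) / (2*D) + (D/2) * (2 * Real.sqrt (V T)) := by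
        have h2D : (0:ℝ) < 2*D := by linarith
        have hD2 : (0:ℝ) ≤ D/2 := by linarith
        rw [div_eq_mul_inv, div_eq_mul_inv]
        exact add_le_add (mul_le_mul_of_nonneg_right hsum1 (inv_pos.mpr h2D).le)
          (mul_le_mul_of_nonneg_left hsum2 hD2)
    _ = (3/2) * D * Real.sqrt (V T) := by
        field_simp
        ring
end

section
/- Run the discounted OCP algorithm A_CP with hyperparameter ε > 0 and discount factors λ_t ∈ (0,∞) (λ_0 := 1): initialize S*_{0,clip} = 0, V*_{0,clip} = 0, G*_0 = 0; predict r_t = max(r̃_t, 0) where r̃_t = 0 if G*_{t-1} = 0 and otherwise r̃_t is given by the erfi-based formula r̃_t = ε·erfi( S*_{t-1,clip} / (2√(V*_{t-1,clip} + 2G*_{t-1}S*_{t-1,clip} + 16(G*_{t-1})²)) ) − ε·G*_{t-1}/√(V*_{t-1,clip} + 2G*_{t-1}S*_{t-1,clip} + 16(G*_{t-1})²) · exp( (S*_{t-1,clip})² / (4(V*_{t-1,clip} + 2G*_{t-1}S*_{t-1,clip} + 16(G*_{t-1})²)) ); receive g*_t ∈ ∂f*_t(r_t), where f*_t is convex on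 [0,∞), minimized at r*_t ∈ [0,∞), with g*_t ≤ 0 whenever r_t = r*_t; set g*_{t,clip} = the projection of g*_t onto [−λ_{t-1}G*_{t-1}, λ_{t-1}G*_{t-1}], S*_{t,clip} = λ_{t-1}·S*_{t-1,clip} − g*_{t,clip}, V*_{t,clip} = λ_{t-1}²·V*_{t-1,clip} + (g*_{t,clip})², G*_t = max(λ_{t-1}·G*_{t-1}, |g*_t|). Define the discounted coverage metric S*_t := −Σ_{i=1}^t (∏_{j=i}^{t-1} λ_j)·g*_i. Then for all t ∈ ℕ_+: |S*_t| ≤ 2·√(V*_{t,clip})·(1 + √(log(1 + 2r_{t+1}·ε^{-1}))) + 14·G*_t·(1 + √(log(1 + 2r_{t+1}·ε^{-1})))². -/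
open scoped BigOperators

/-- The (rescaled) imaginary error function `erfi(x) = ∫₀ˣ exp(u²) du`. -/
noncomputable def erfi (x : ℝ) : ℝ := ∫ u in (0:ℝ)..x, Real.exp (u^2)

set_option maxHeartbeats 1000000

lemma erfi_nonpos {x : ℝ} (hx : x ≤ 0) : erfi x ≤ 0 := by
  unfold erfi
  rw [intervalIntegral.integral_symm]
  simp only [neg_nonpos]
  exact intervalIntegral.integral_nonneg hx (fun u _ => (Real.exp_pos _).le)

lemma erfi_le {x : ℝ} (hx : 0 ≤ x) : erfi x ≤ x * Real.exp (x^2) := by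
  unfold erfi
  have h : ∫ u in (0:ℝ)..x, Real.exp (x^2) = x * Real.exp (x^2) := by
    simp
  rw [← h]
  refine intervalIntegral.integral_mono_on hx ?_ ?_ ?_
  · exact (Real.continuous_exp.comp (continuous_pow 2)).intervalIntegrable _ _
  · exact intervalIntegrable_const
  · intro u hu
    exact Real.exp_le_exp.2 (by nlinarith [hu.1, hu.2])

lemma erfi_ge {x : ℝ} (hx : 0 < x) : (Real.exp (x^2) - 1) / (2*x) ≤ erfi x := by
  have hint : ∫ u in (0:ℝ)..x, u * Real.exp (u^2) = (Real.exp (x^2) - 1)/2 := by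
    have : ∀ u ∈ Set.uIcc (0:ℝ) x, HasDerivAt (fun v => Real.exp (v^2)/2) (u * Real.exp (u^2)) u := by
      intro u _
      have h1 : HasDerivAt (fun v : ℝ => v^2) (2*u) u := by
        simpa using (hasDerivAt_pow 2 u)
      have h2 := (h1.exp).div_const 2
      rw [show u * Real.exp (u^2) = Real.exp (u^2) * (2*u) / 2 by ring]
      exact h2
    rw [intervalIntegral.integral_eq_sub_of_hasDerivAt this
      (((continuous_id.mul (Real.continuous_exp.comp (continuous_pow 2)))).intervalIntegrable _ _)]
    norm_num
    ring
  have hmono : ∫ u in (0:ℝ)..x, (u/x) * Real.exp (u^2) ≤ erfi x := by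
    unfold erfi
    refine intervalIntegral.integral_mono_on hx.le ?_ ?_ ?_
    · exact ((continuous_id.div_const x).mul (Real.continuous_exp.comp (continuous_pow 2))).intervalIntegrable _ _
    · exact (Real.continuous_exp.comp (continuous_pow 2)).intervalIntegrable _ _
    · intro u hu
      have h1 : u / x ≤ 1 := (div_le_one hx).2 hu.2
      nlinarith [Real.exp_pos (u^2)]
  have heq : ∫ u in (0:ℝ)..x, (u/x) * Real.exp (u^2) = (Real.exp (x^2) - 1)/(2*x) := by
    have : ∀ u : ℝ, (u/x) * Real.exp (u^2) = (1/x) * (u * Real.exp (u^2)) := by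
      intro u; ring
    simp_rw [this]
    rw [intervalIntegral.integral_const_mul, hint]
    ring
  linarith [hmono, heq ▸ hmono]

lemma aux_S_gt {V G S eps : ℝ} (hV : 0 ≤ V) (hG : 0 < G) (hS : 0 ≤ S) (heps : 0 < eps)
    (h : 0 < eps * erfi (S / (2 * Real.sqrt (V + 2*G*S + 16*G^2)))
      - eps * G / Real.sqrt (V + 2*G*S + 16*G^2)
        * Real.exp (S^2 / (4 * (V + 2*G*S + 16*G^2)))) : 2*G < S := by
  obtain ⟨D, hDdef⟩ : ∃ D : ℝ, D = V + 2*G*S + 16*G^2 := ⟨_, rfl⟩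
  rw [← hDdef] at h
  have hD : 0 < D := by rw [hDdef]; positivity
  have hsD : 0 < Real.sqrt D := Real.sqrt_pos.2 hD
  have hsD2 : Real.sqrt D ^ 2 = D := Real.sq_sqrt hD.le
  obtain ⟨u, hudef⟩ : ∃ u : ℝ, u = S / (2 * Real.sqrt D) := ⟨_, rfl⟩
  rw [← hudef] at h
  have hu0 : 0 ≤ u := by rw [hudef]; positivity
  have h2sq : (2*Real.sqrt D)^2 = 4*D := by rw [mul_pow, hsD2]; ring
  have hexp : S^2 / (4 * D) = u^2 := by rw [hudef, div_pow, h2sq]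
  rw [hexp] at h
  have hc : 0 < G / Real.sqrt D := by positivity
  have hex := Real.exp_pos (u^2)
  have hdiv : 0 < erfi u - G / Real.sqrt D * Real.exp (u^2) := by
    have hh : eps * erfi u - eps * G / Real.sqrt D * Real.exp (u^2)
        = eps * (erfi u - G / Real.sqrt D * Real.exp (u^2)) := by ring
    rw [hh] at h
    rcases mul_pos_iff.mp h with ⟨_, hx⟩ | ⟨he, _⟩
    · exact hx
    · linarith
  have hupos : 0 < u := by
    by_contra hle
    push_neg at hle
    have h5 := erfi_nonpos hle
    nlinarith [mul_pos hc hex]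
  have h3 : G / Real.sqrt D < u := by
    by_contra h6
    push_neg at h6
    have h7 := erfi_le hu0
    nlinarith [mul_le_mul_of_nonneg_right h6 hex.le]
  by_contra hc2
  push_neg at hc2
  rw [hudef, div_lt_div_iff₀ hsD (by positivity)] at h3
  nlinarith [hsD]

lemma aux_inversion {V G S eps r : ℝ} (hV : 0 ≤ V) (hG : 0 < G) (hS : 0 ≤ S)
    (heps : 0 < eps) (hr0 : 0 ≤ r)
    (h : eps * erfi (S / (2 * Real.sqrt (V + 2*G*S + 16*G^2)))
      - eps * G / Real.sqrt (V + 2*G*S + 16*G^2)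
        * Real.exp (S^2 / (4 * (V + 2*G*S + 16*G^2))) ≤ r) :
    S ≤ 2 * Real.sqrt V * (1 + Real.sqrt (Real.log (1 + 2*r*eps⁻¹)))
      + 13 * G * (1 + Real.sqrt (Real.log (1 + 2*r*eps⁻¹)))^2 := by
  obtain ⟨D, hDdef⟩ : ∃ D : ℝ, D = V + 2*G*S + 16*G^2 := ⟨_, rfl⟩
  rw [← hDdef] at h
  have hD : 0 < D := by rw [hDdef]; positivity
  have hsD : 0 < Real.sqrt D := Real.sqrt_pos.2 hD
  have hsD2 : Real.sqrt D ^ 2 = D := Real.sq_sqrt hD.le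
  obtain ⟨u, hudef⟩ : ∃ u : ℝ, u = S / (2 * Real.sqrt D) := ⟨_, rfl⟩
  rw [← hudef] at h
  have hu0 : 0 ≤ u := by rw [hudef]; positivity
  have h2sq : (2*Real.sqrt D)^2 = 4*D := by rw [mul_pow, hsD2]; ring
  have hexp : S^2 / (4 * D) = u^2 := by rw [hudef, div_pow, h2sq]
  rw [hexp] at h
  have hSu : S = 2 * u * Real.sqrt D := by
    rw [hudef]; field_simp
  obtain ⟨L, hLdef⟩ : ∃ L : ℝ, L = Real.log (1 + 2*r*eps⁻¹) := ⟨_, rfl⟩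
  rw [← hLdef]
  have hL0 : 0 ≤ L := by
    rw [hLdef]
    apply Real.log_nonneg
    have : 0 ≤ 2*r*eps⁻¹ := by positivity
    linarith
  obtain ⟨w, hwdef⟩ : ∃ w : ℝ, w = 1 + Real.sqrt L := ⟨_, rfl⟩
  rw [← hwdef]
  have hsL0 : 0 ≤ Real.sqrt L := Real.sqrt_nonneg _
  have hw1 : 1 ≤ w := by rw [hwdef]; linarith
  have hw0 : 0 ≤ w := by linarith
  have huw : u ≤ w := by
    rcases le_or_gt u 1 with h1 | h1
    · linarith
    · have hupos : (0:ℝ) < u := lt_trans one_pos h1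
      have hkey : 4*u*G ≤ Real.sqrt D := by
        have h9 : 4*u*G*Real.sqrt D = 2*S*G := by rw [hSu]; nlinarith [hsD2]
        have h10 : 2*S*G ≤ D := by nlinarith [sq_nonneg G]
        by_contra hnot
        push_neg at hnot
        nlinarith [mul_lt_mul_of_pos_right hnot hsD]
      have hcu : G / Real.sqrt D ≤ 1/(4*u) := by
        rw [div_le_div_iff₀ hsD (by positivity)]
        nlinarith [hkey]
      have herfi := erfi_ge hupos
      have hex := Real.exp_pos (u^2)
      have hre : Real.exp (u^2)/(4*u) - 1/(2*u) ≤ r/eps := by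
        have h4 : erfi u - G / Real.sqrt D * Real.exp (u^2) ≤ r / eps := by
          rw [le_div_iff₀ heps]
          have hring : (erfi u - G / Real.sqrt D * Real.exp (u^2)) * eps
              = eps * erfi u - eps * G / Real.sqrt D * Real.exp (u^2) := by ring
          linarith [hring]
        have h6 : G / Real.sqrt D * Real.exp (u^2) ≤ (1/(4*u)) * Real.exp (u^2) :=
          mul_le_mul_of_nonneg_right hcu hex.le
        have h7 : (Real.exp (u^2) - 1) / (2*u) - (1/(4*u)) * Real.exp (u^2)
            = Real.exp (u^2)/(4*u) - 1/(2*u) := by field_simp; ring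
        linarith
      have hlb : Real.exp (u^2)/(2*u) ≤ 1 + 2*r*eps⁻¹ := by
        have ha : Real.exp (u^2)/(2*u) = 2*(Real.exp (u^2)/(4*u)) := by ring
        have hb : 1/u = 2*(1/(2*u)) := by ring
        have hc2 : 1/u ≤ 1 := by rw [div_le_one hupos]; linarith
        have hd : 2*(r/eps) = 2*r*eps⁻¹ := by ring
        linarith
      have hlog : u^2 - Real.log (2*u) ≤ L := by
        have hpos : (0:ℝ) < Real.exp (u^2)/(2*u) := by positivity
        have h11 := Real.log_le_log hpos hlb
        rw [Real.log_div hex.ne' (show (2*u:ℝ) ≠ 0 by positivity), Real.log_exp, ← hLdef] at h11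
        linarith
      have hlogle : Real.log (2*u) ≤ 2*u - 1 := by
        have := Real.log_le_sub_one_of_pos (show (0:ℝ) < 2*u by linarith)
        linarith
      have hsq : (u-1)^2 ≤ L := by nlinarith
      have h8 := Real.sqrt_le_sqrt hsq
      rw [Real.sqrt_sq (by linarith : (0:ℝ) ≤ u - 1)] at h8
      linarith
  -- final quadratic bound
  obtain ⟨sv, hsvdef⟩ : ∃ sv : ℝ, sv = Real.sqrt V := ⟨_, rfl⟩
  rw [← hsvdef]
  have hsv0 : 0 ≤ sv := by rw [hsvdef]; exact Real.sqrt_nonneg _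
  have hsv2 : sv ^ 2 = V := by rw [hsvdef]; exact Real.sq_sqrt hV
  have hSsq : S^2 = 4*u^2*V + 8*u^2*G*S + 64*u^2*G^2 := by
    have h1 : S^2 = 4*u^2*D := by
      rw [hSu]; linear_combination (4*u^2) * hsD2
    rw [h1, hDdef]; ring
  have hu2w2 : u^2 ≤ w^2 := by nlinarith
  have step1 : S^2 ≤ 4*w^2*V + 8*w^2*G*S + 64*w^2*G^2 := by
    have d1 : 0 ≤ (w^2 - u^2) * V := mul_nonneg (by linarith) hV
    have d2 : 0 ≤ (w^2 - u^2) * (G*S) := mul_nonneg (by linarith) (mul_nonneg hG.le hS)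
    have d3 : 0 ≤ (w^2 - u^2) * G^2 := mul_nonneg (by linarith) (sq_nonneg G)
    nlinarith [hSsq, d1, d2, d3]
  by_contra hgt
  push_neg at hgt
  have hw2 : (0:ℝ) < w^2 := by positivity
  have hBnn : (0:ℝ) ≤ 2*sv*w + 13*G*w^2 := by positivity
  have hB : 2*sv*w + 13*G*w^2 < S := by nlinarith [hgt]
  have hsum : 0 < S + (2*sv*w + 13*G*w^2) - 8*w^2*G := by
    nlinarith [mul_nonneg hsv0 hw0, mul_pos hG hw2]
  have hfac : 0 < (S - (2*sv*w + 13*G*w^2)) * (S + (2*sv*w + 13*G*w^2) - 8*w^2*G) :=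
    mul_pos (by linarith) hsum
  have h65 : w^2*G^2 ≤ w^4*G^2 := by
    nlinarith [mul_nonneg (mul_nonneg (show (0:ℝ) ≤ w^2 - 1 by nlinarith) (sq_nonneg w)) (sq_nonneg G)]
  have h36 : 0 ≤ w^3*G*sv := mul_nonneg (mul_nonneg (pow_nonneg hw0 3) hG.le) hsv0
  nlinarith [hfac, step1, h65, h36, hsv2]

lemma unroll (lam x c : ℕ → ℝ) (h0 : x 0 = 0)
    (hrec : ∀ t, 1 ≤ t → x t = lam (t-1) * x (t-1) + c t) :
    ∀ t, x t = ∑ i ∈ Finset.Icc 1 t, (∏ j ∈ Finset.Icc i (t-1), lam j) * c i := by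
  intro t
  induction t with
  | zero => simpa using h0
  | succ n ih =>
    have hrec1 := hrec (n+1) (by omega)
    simp only [Nat.add_sub_cancel] at hrec1 ⊢
    rw [hrec1, ih]
    rw [Finset.sum_Icc_succ_top (by omega : 1 ≤ n+1)]
    have hempty : Finset.Icc (n+1) n = ∅ := Finset.Icc_eq_empty (by omega)
    rw [hempty, Finset.prod_empty, one_mul]
    have hmain : ∑ i ∈ Finset.Icc 1 n, (∏ j ∈ Finset.Icc i n, lam j) * c i
        = lam n * ∑ i ∈ Finset.Icc 1 n, (∏ j ∈ Finset.Icc i (n-1), lam j) * c i := by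
      rw [Finset.mul_sum]
      apply Finset.sum_congr rfl
      intro i hi
      obtain ⟨h1, h2⟩ := Finset.mem_Icc.mp hi
      have hn : n - 1 + 1 = n := by omega
      calc (∏ j ∈ Finset.Icc i n, lam j) * c i
          = (∏ j ∈ Finset.Icc i (n-1+1), lam j) * c i := by rw [hn]
        _ = ((∏ j ∈ Finset.Icc i (n-1), lam j) * lam (n-1+1)) * c i := by
            rw [Finset.prod_Icc_succ_top (by omega : i ≤ n-1+1)]
        _ = lam n * ((∏ j ∈ Finset.Icc i (n-1), lam j) * c i) := by rw [hn]; ring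
    rw [hmain]


/-- For the discounted OCP algorithm `A_CP`, the discounted coverage metric
`S*_t` satisfies
`|S*_t| ≤ 2√(V*_{t,clip})(1+√log(1+2r_{t+1}/ε)) + 14·G*_t·(1+√log(1+2r_{t+1}/ε))²`. -/
theorem ocp_coverage_bound_prediction
    (eps : ℝ) (heps : 0 < eps)
    (lam : ℕ → ℝ) (hlam : ∀ t, 0 < lam t) (hlam0 : lam 0 = 1)
    (f : ℕ → ℝ → ℝ) (rstar : ℕ → ℝ)
    (Sc Vc Gs rt r gs gclip : ℕ → ℝ)
    (hSc0 : Sc 0 = 0) (hVc0 : Vc 0 = 0) (hGs0 : Gs 0 = 0)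
    (hrt : ∀ t, 1 ≤ t →
      (Gs (t-1) = 0 → rt t = 0) ∧
      (Gs (t-1) ≠ 0 → rt t =
        eps * erfi (Sc (t-1) /
          (2 * Real.sqrt (Vc (t-1) + 2 * Gs (t-1) * Sc (t-1) + 16 * (Gs (t-1))^2)))
        - eps * Gs (t-1) / Real.sqrt (Vc (t-1) + 2 * Gs (t-1) * Sc (t-1) + 16 * (Gs (t-1))^2)
          * Real.exp ((Sc (t-1))^2 /
            (4 * (Vc (t-1) + 2 * Gs (t-1) * Sc (t-1) + 16 * (Gs (t-1))^2)))))
    (hr : ∀ t, 1 ≤ t → r t = max (rt t) 0)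
    (hfconv : ∀ t, ConvexOn ℝ (Set.Ici 0) (f t))
    (hrstar : ∀ t, 0 ≤ rstar t)
    (hmin : ∀ t, ∀ y ∈ Set.Ici (0:ℝ), f t (rstar t) ≤ f t y)
    (hsub : ∀ t, 1 ≤ t → ∀ y ∈ Set.Ici (0:ℝ), f t (r t) + gs t * (y - r t) ≤ f t y)
    (hneg : ∀ t, 1 ≤ t → r t = rstar t → gs t ≤ 0)
    (hclip : ∀ t, 1 ≤ t →
      gclip t = max (-(lam (t-1) * Gs (t-1))) (min (gs t) (lam (t-1) * Gs (t-1))))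
    (hScrec : ∀ t, 1 ≤ t → Sc t = lam (t-1) * Sc (t-1) - gclip t)
    (hVcrec : ∀ t, 1 ≤ t → Vc t = (lam (t-1))^2 * Vc (t-1) + (gclip t)^2)
    (hGsrec : ∀ t, 1 ≤ t → Gs t = max (lam (t-1) * Gs (t-1)) |gs t|)
    (Sstar : ℕ → ℝ)
    (hSstar : ∀ t, Sstar t = -∑ i ∈ Finset.Icc 1 t, (∏ j ∈ Finset.Icc i (t-1), lam j) * gs i) :
    ∀ t, 1 ≤ t →
      |Sstar t| ≤ 2 * Real.sqrt (Vc t)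
          * (1 + Real.sqrt (Real.log (1 + 2 * r (t+1) * eps⁻¹)))
        + 14 * Gs t * (1 + Real.sqrt (Real.log (1 + 2 * r (t+1) * eps⁻¹)))^2 := by
  -- gs positive implies prediction positive
  have hgs_pos_r : ∀ t, 1 ≤ t → 0 < gs t → 0 < rt t := by
    intro t ht hgs
    have hrnn : 0 ≤ r t := by rw [hr t ht]; exact le_max_right _ _
    have hrpos : 0 < r t := by
      rcases eq_or_lt_of_le hrnn with he | hp
      · exfalso
        have he' : r t = 0 := he.symm
        by_cases hre : r t = rstar t
        · exact absurd (hneg t ht hre) (by linarith)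
        · have hrs : 0 < rstar t := by
            rcases eq_or_lt_of_le (hrstar t) with he2 | hp2
            · exact absurd (by rw [he', ← he2] : r t = rstar t) hre
            · exact hp2
          have h1 := hsub t ht (rstar t) (Set.mem_Ici.mpr (hrstar t))
          have h2 := hmin t (r t) (Set.mem_Ici.mpr hrnn)
          rw [he'] at h1 h2
          nlinarith [mul_pos hgs hrs]
      · exact hp
    rw [hr t ht] at hrpos
    rcases le_or_gt (rt t) 0 with h0 | h1
    · rw [max_eq_right h0] at hrpos; linarith
    · exact h1
  -- core invariant
  have inv : ∀ t, 0 ≤ Gs t ∧ 0 ≤ Vc t ∧ 0 ≤ Sc t := by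
    intro t
    induction t with
    | zero => rw [hGs0, hVc0, hSc0]; norm_num
    | succ n ih =>
      obtain ⟨hGn, hVn, hSn⟩ := ih
      have hGrec := hGsrec (n+1) (by omega)
      have hVrec := hVcrec (n+1) (by omega)
      have hSrec := hScrec (n+1) (by omega)
      simp only [Nat.add_sub_cancel] at hGrec hVrec hSrec
      refine ⟨?_, ?_, ?_⟩
      · rw [hGrec]; exact le_trans (abs_nonneg _) (le_max_right _ _)
      · rw [hVrec]; positivity
      · rw [hSrec]
        rcases le_or_gt (gclip (n+1)) 0 with hg0 | hgp
        · nlinarith [mul_nonneg (hlam n).le hSn]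
        · have hclip1 := hclip (n+1) (by omega)
          simp only [Nat.add_sub_cancel] at hclip1
          have hlG : 0 ≤ lam n * Gs n := mul_nonneg (hlam n).le hGn
          have hmin_pos : 0 < min (gs (n+1)) (lam n * Gs n) := by
            by_contra hm
            push_neg at hm
            rw [hclip1] at hgp
            have : max (-(lam n * Gs n)) (min (gs (n+1)) (lam n * Gs n)) ≤ 0 :=
              max_le (by linarith) hm
            linarith
          have hgs_pos : 0 < gs (n+1) := lt_of_lt_of_le hmin_pos (min_le_left _ _)
          have hlGpos : 0 < lam n * Gs n := lt_of_lt_of_le hmin_pos (min_le_right _ _)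
          have hGn_pos : 0 < Gs n := by
            rcases eq_or_lt_of_le hGn with he | hp
            · rw [← he, mul_zero] at hlGpos; linarith
            · exact hp
          have hrtpos : 0 < rt (n+1) := hgs_pos_r (n+1) (by omega) hgs_pos
          have hform := (hrt (n+1) (by omega)).2
            (by simp only [Nat.add_sub_cancel]; exact ne_of_gt hGn_pos)
          simp only [Nat.add_sub_cancel] at hform
          rw [hform] at hrtpos
          have hSgt := aux_S_gt hVn hGn_pos hSn heps hrtpos
          have hgc_le : gclip (n+1) ≤ lam n * Gs n := by
            rw [hclip1]; exact max_le (by linarith) (min_le_right _ _)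
          nlinarith [mul_lt_mul_of_pos_left hSgt (hlam n)]
  -- per-round clipping error bound
  have hei : ∀ i, 1 ≤ i → |gclip i - gs i| ≤ Gs i - lam (i-1) * Gs (i-1) := by
    intro i hi
    have hc := hclip i hi
    have hg := hGsrec i hi
    have ha : 0 ≤ lam (i-1) * Gs (i-1) := mul_nonneg (hlam _).le (inv (i-1)).1
    rw [hc, hg]
    rcases le_total (gs i) (lam (i-1) * Gs (i-1)) with h1 | h1
    · rcases le_total (-(lam (i-1) * Gs (i-1))) (gs i) with h2 | h2
      · rw [min_eq_left h1, max_eq_right h2]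
        simp only [sub_self, abs_zero]
        linarith [le_max_left (lam (i-1) * Gs (i-1)) |gs i|]
      · rw [min_eq_left h1, max_eq_left h2]
        have habs : |gs i| = -gs i := abs_of_nonpos (by linarith)
        rw [max_eq_right (by rw [habs]; linarith : lam (i-1) * Gs (i-1) ≤ |gs i|), habs,
          abs_of_nonneg (by linarith : (0:ℝ) ≤ -(lam (i-1) * Gs (i-1)) - gs i)]
        linarith
    · rw [min_eq_right h1, max_eq_right (by linarith : -(lam (i-1) * Gs (i-1)) ≤ lam (i-1) * Gs (i-1))]
      have habs : |gs i| = gs i := abs_of_nonneg (by linarith)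
      rw [max_eq_right (by rw [habs]; linarith : lam (i-1) * Gs (i-1) ≤ |gs i|), habs,
        abs_of_nonpos (by linarith : lam (i-1) * Gs (i-1) - gs i ≤ 0)]
      linarith
  -- unrolled representations
  have hScunroll := unroll lam Sc (fun i => -(gclip i)) hSc0
    (fun t ht => by rw [hScrec t ht]; ring)
  have hGsunroll := unroll lam Gs (fun i => Gs i - lam (i-1) * Gs (i-1)) hGs0
    (fun t ht => by ring)
  -- main argument
  intro t ht
  have hrnn : 0 ≤ r (t+1) := by rw [hr (t+1) (by omega)]; exact le_max_right _ _
  have hL0 : 0 ≤ Real.log (1 + 2 * r (t+1) * eps⁻¹) := by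
    apply Real.log_nonneg
    have : 0 ≤ 2 * r (t+1) * eps⁻¹ := by positivity
    linarith
  have hsL0 : 0 ≤ Real.sqrt (Real.log (1 + 2 * r (t+1) * eps⁻¹)) := Real.sqrt_nonneg _
  -- clipping error accumulation
  have hP0 : ∀ i, (0:ℝ) ≤ ∏ j ∈ Finset.Icc i (t-1), lam j :=
    fun i => Finset.prod_nonneg (fun j _ => (hlam j).le)
  have hdiff : Sstar t - Sc t
      = ∑ i ∈ Finset.Icc 1 t, (∏ j ∈ Finset.Icc i (t-1), lam j) * (gclip i - gs i) := by
    rw [hSstar t, hScunroll t]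
    rw [← Finset.sum_neg_distrib, ← Finset.sum_sub_distrib]
    apply Finset.sum_congr rfl
    intro i _
    ring
  have habs1 : |Sstar t - Sc t| ≤ Gs t := by
    have h1 : |Sstar t - Sc t|
        ≤ ∑ i ∈ Finset.Icc 1 t, (∏ j ∈ Finset.Icc i (t-1), lam j)
            * (Gs i - lam (i-1) * Gs (i-1)) := by
      rw [hdiff]
      refine le_trans (Finset.abs_sum_le_sum_abs _ _) (Finset.sum_le_sum ?_)
      intro i hi
      rw [abs_mul, abs_of_nonneg (hP0 i)]
      exact mul_le_mul_of_nonneg_left (hei i (Finset.mem_Icc.mp hi).1) (hP0 i)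
    rw [← hGsunroll t] at h1
    exact h1
  have habs2 : |Sstar t| ≤ Sc t + Gs t := by
    have h1 : |Sstar t| ≤ |Sstar t - Sc t| + |Sc t| := by
      calc |Sstar t| = |(Sstar t - Sc t) + Sc t| := by ring_nf
        _ ≤ |Sstar t - Sc t| + |Sc t| := abs_add_le _ _
    rw [abs_of_nonneg (inv t).2.2] at h1
    linarith
  by_cases hG0 : Gs t = 0
  · -- degenerate case: all gradients were zero
    have hall : ∀ k, Gs k = 0 → ∀ i, 1 ≤ i → i ≤ k → gs i = 0 := by
      intro k
      induction k with
      | zero => intro _ i h1 h2; omega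
      | succ n ihk =>
        intro hGk i h1 h2
        have hg := hGsrec (n+1) (by omega)
        simp only [Nat.add_sub_cancel] at hg
        rw [hGk] at hg
        have h3 : |gs (n+1)| ≤ 0 := hg ▸ le_max_right _ _
        have h4 : lam n * Gs n ≤ 0 := hg ▸ le_max_left _ _
        have hGn0 : Gs n = 0 := by
          have hGn := (inv n).1
          nlinarith [hlam n]
        rcases Nat.lt_or_ge i (n+1) with hlt | hge
        · exact ihk hGn0 i h1 (by omega)
        · have : i = n+1 := by omega
          rw [this]
          exact abs_eq_zero.mp (le_antisymm h3 (abs_nonneg _))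
    have hSstar0 : Sstar t = 0 := by
      rw [hSstar t, Finset.sum_eq_zero, neg_zero]
      intro i hi
      obtain ⟨h1, h2⟩ := Finset.mem_Icc.mp hi
      rw [hall t hG0 i h1 h2, mul_zero]
    rw [hSstar0, abs_zero, hG0]
    have hsV : 0 ≤ Real.sqrt (Vc t) := Real.sqrt_nonneg _
    nlinarith [mul_nonneg hsV hsL0]
  · -- main case
    have hGpos : 0 < Gs t := lt_of_le_of_ne (inv t).1 (Ne.symm hG0)
    have hform := (hrt (t+1) (by omega)).2
      (by simp only [Nat.add_sub_cancel]; exact hG0)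
    simp only [Nat.add_sub_cancel] at hform
    have hle : eps * erfi (Sc t /
          (2 * Real.sqrt (Vc t + 2 * Gs t * Sc t + 16 * (Gs t)^2)))
        - eps * Gs t / Real.sqrt (Vc t + 2 * Gs t * Sc t + 16 * (Gs t)^2)
          * Real.exp ((Sc t)^2 / (4 * (Vc t + 2 * Gs t * Sc t + 16 * (Gs t)^2)))
        ≤ r (t+1) := by
      rw [hr (t+1) (by omega), ← hform]
      exact le_max_left _ _
    have hmain := aux_inversion (inv t).2.1 hGpos (inv t).2.2 heps hrnn hle
    have hGW : Gs t ≤ Gs t * (1 + Real.sqrt (Real.log (1 + 2 * r (t+1) * eps⁻¹)))^2 := by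
      nlinarith [mul_nonneg hGpos.le (mul_nonneg hsL0 hsL0), mul_nonneg hGpos.le hsL0]
    linarith [habs2, hmain, hGW]
end
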